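/- Let h be a strictly positive smooth function on an open set U>0 ⊆ ℝ², and suppose there exist smooth functions f₁,…,f_p on an open set U ⊇ U>0 with h^{1/4} = Σ_{i=1}^p f_i h_i on U>0, where h = Σ h_i². Then by Cauchy–Schwarz h^{1/4} ≤ h^{1/2}·(Σ f_i²)^{1/2}, hence 1/h^{1/4} ≤ (Σ f_i²)^{1/2} on U>0; consequently if h tends to 0 at a boundary point of U>0 interior to U, the functions f_i cannot all be continuous there, a contradiction showing no such decomposition exists. -/

import Mathlib

/-- The Cauchy–Schwarz argument.  Let `U ⊆ ℝ²` be open, `U₊ = {q ∈ U | 0 < q.1}`,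
let `h = Σᵢ hᵢ²` be strictly positive on `U₊`, and suppose there are continuous (e.g.
smooth) functions `f₁, …, f_p` on `U` with `h^{1/4} = Σᵢ fᵢ·hᵢ` on `U₊`.  Then by
Cauchy–Schwarz `h^{1/4} ≤ h^{1/2}·(Σ fᵢ²)^{1/2}` on `U₊`, hence
`1/h^{1/4} ≤ (Σ fᵢ²)^{1/2}` on `U₊`; consequently, if `h` tends to `0` at a point of the
closure of `U₊` lying in `U`, the (continuous) functions `fᵢ` would have to blow up there
— a contradiction, so no such situation can occur (`False`). -/
theorem stmt17 (U : Set (ℝ × ℝ)) (hU : IsOpen U) (p : ℕ)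
    (hc f : Fin p → (ℝ × ℝ) → ℝ)
    (hde : ∀ x ∈ {q ∈ U | 0 < q.1},
      (∑ i, (hc i x) ^ 2) ^ ((1 : ℝ) / 4) = ∑ i, f i x * hc i x)
    (hpos : ∀ x ∈ {q ∈ U | 0 < q.1}, 0 < ∑ i, (hc i x) ^ 2)
    (hfc : ∀ i, ContinuousOn (f i) U) :
    (∀ x ∈ {q ∈ U | 0 < q.1},
      (∑ i, (hc i x) ^ 2) ^ ((1 : ℝ) / 4)
        ≤ (∑ i, (hc i x) ^ 2) ^ ((1 : ℝ) / 2) * Real.sqrt (∑ i, (f i x) ^ 2)) ∧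
    (∀ x ∈ {q ∈ U | 0 < q.1},
      1 / (∑ i, (hc i x) ^ 2) ^ ((1 : ℝ) / 4) ≤ Real.sqrt (∑ i, (f i x) ^ 2)) ∧
    (∀ z ∈ U, z ∈ closure {q ∈ U | 0 < q.1} →
      Filter.Tendsto (fun x => ∑ i, (hc i x) ^ 2)
        (nhdsWithin z {q ∈ U | 0 < q.1}) (nhds 0) →
      False) := by
  set Up := {q ∈ U | 0 < q.1} with hUp
  have part1 : ∀ x ∈ Up,
      (∑ i, (hc i x) ^ 2) ^ ((1 : ℝ) / 4)
        ≤ (∑ i, (hc i x) ^ 2) ^ ((1 : ℝ) / 2) * Real.sqrt (∑ i, (f i x) ^ 2) := by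
    intro x hx
    have hcs := Finset.sum_mul_sq_le_sq_mul_sq Finset.univ (fun i => f i x) (fun i => hc i x)
    have hh := hpos x hx
    have h0 : (0:ℝ) ≤ ∑ i, (hc i x) ^ 2 := hh.le
    have hf0 : (0:ℝ) ≤ ∑ i, (f i x) ^ 2 :=
      Finset.sum_nonneg fun i _ => sq_nonneg _
    have key : ∑ i, f i x * hc i x ≤
        Real.sqrt (∑ i, (f i x) ^ 2) * Real.sqrt (∑ i, (hc i x) ^ 2) := by
      rw [← Real.sqrt_mul hf0]
      refine le_trans (le_abs_self _) ?_
      rw [← Real.sqrt_sq_eq_abs]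
      exact Real.sqrt_le_sqrt hcs
    calc (∑ i, (hc i x) ^ 2) ^ ((1 : ℝ) / 4) = ∑ i, f i x * hc i x := hde x hx
      _ ≤ Real.sqrt (∑ i, (f i x) ^ 2) * Real.sqrt (∑ i, (hc i x) ^ 2) := key
      _ = (∑ i, (hc i x) ^ 2) ^ ((1 : ℝ) / 2) * Real.sqrt (∑ i, (f i x) ^ 2) := by
          simp [Real.sqrt_eq_rpow, mul_comm]
  have part2 : ∀ x ∈ Up,
      1 / (∑ i, (hc i x) ^ 2) ^ ((1 : ℝ) / 4) ≤ Real.sqrt (∑ i, (f i x) ^ 2) := by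
    intro x hx
    have hh := hpos x hx
    have ha : (0:ℝ) < (∑ i, (hc i x) ^ 2) ^ ((1 : ℝ) / 4) := Real.rpow_pos_of_pos hh _
    have hsplit : (∑ i, (hc i x) ^ 2) ^ ((1 : ℝ) / 2)
        = (∑ i, (hc i x) ^ 2) ^ ((1 : ℝ) / 4) * (∑ i, (hc i x) ^ 2) ^ ((1 : ℝ) / 4) := by
      rw [← Real.rpow_add hh]; norm_num
    have h1 := part1 x hx
    rw [hsplit] at h1
    rw [div_le_iff₀ ha]
    nlinarith [Real.sqrt_nonneg (∑ i, (f i x) ^ 2)]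
  refine ⟨part1, part2, ?_⟩
  intro z hz hzc htend
  have hne : (nhdsWithin z Up).NeBot := mem_closure_iff_nhdsWithin_neBot.mp hzc
  -- sqrt (∑ fᵢ²) is continuous within U at z, hence within Up
  have hS : Filter.Tendsto (fun x => Real.sqrt (∑ i, (f i x) ^ 2))
      (nhdsWithin z Up) (nhds (Real.sqrt (∑ i, (f i z) ^ 2))) := by
    have h1 : Filter.Tendsto (fun x => ∑ i, (f i x) ^ 2) (nhdsWithin z Up)
        (nhds (∑ i, (f i z) ^ 2)) :=
      tendsto_finset_sum _ fun i _ =>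
        (((hfc i z hz).mono fun q hq => hq.1).pow 2 : ContinuousWithinAt _ _ _)
    exact (Real.continuous_sqrt.continuousAt.tendsto.comp h1)
  -- h^{1/4} → 0 within Up, with positive values, so 1/h^{1/4} → atTop
  have h14 : Filter.Tendsto (fun x => (∑ i, (hc i x) ^ 2) ^ ((1 : ℝ) / 4))
      (nhdsWithin z Up) (nhdsWithin 0 (Set.Ioi 0)) := by
    rw [tendsto_nhdsWithin_iff]
    constructor
    · have hcont : ContinuousAt (fun t : ℝ => t ^ ((1 : ℝ) / 4)) 0 :=
        Real.continuousAt_rpow_const 0 _ (Or.inr (by norm_num))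
      have := hcont.tendsto.comp htend
      simpa [Real.zero_rpow (by norm_num : (1:ℝ)/4 ≠ 0), Function.comp_def] using this
    · filter_upwards [self_mem_nhdsWithin] with x hx
      exact Real.rpow_pos_of_pos (hpos x hx) _
  have hinv : Filter.Tendsto (fun x => 1 / (∑ i, (hc i x) ^ 2) ^ ((1 : ℝ) / 4))
      (nhdsWithin z Up) Filter.atTop := by
    simpa [one_div, Function.comp_def] using tendsto_inv_nhdsGT_zero.comp h14
  have hStop : Filter.Tendsto (fun x => Real.sqrt (∑ i, (f i x) ^ 2))
      (nhdsWithin z Up) Filter.atTop := by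
    refine Filter.tendsto_atTop_mono' _ ?_ hinv
    filter_upwards [self_mem_nhdsWithin] with x hx using part2 x hx
  exact not_tendsto_atTop_of_tendsto_nhds hS hStop
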